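/- Consider a cross-talk RFM of length n with M ribosome species, constant inputs u^p > 0, and homogeneous elongation rates: λ^p_j = λ_j for all species p and all j = 1,…,n. Then the species sums s_j(t) = Σ_{p=1}^M x^p_j(t) satisfy, along any solution of the cross-talk RFM, the standard RFM equations of length n with rates λ_1,…,λ_n, unit input, and effective initiation rate λ^s_0 := Σ_{p=1}^M λ^p_0 u^p: ds_1/dt = λ^s_0 (1 − s_1) − λ_1 s_1 (1 − s_2); ds_j/dt = λ_{j−1} s_{j−1} (1 − s_j) − λ_j s_j (1 − s_{j+1}) for 1 < j < n; ds_n/dt = λ_{n−1} s_{n−1} (1 − s_n) − λ_n s_n. Moreover each individual occupancy satisfies dx^p_j/dt = λ_{j−1} (1 − s_j) x^p_{j−1} − λ_j (1 − s_{j+1}) x^p_j for 1 < j < n. -/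

import Mathlib

/-- Ribosomal flux of species `p` from codon `k` to codon `k+1` in a cross-talk
RFM of length `n` with `M` species, homogeneous elongation rates `lam j`
(`j = 1,…,n`), species initiation rates `lam0 p` and constant inputs `u p`;
`x p j` is the occupancy of species `p` at codon `j` (1-based), and the total
occupancy of codon `j` is `s j = ∑_{p<M} x p j`. -/
noncomputable def crossFlow (M n : ℕ) (lam0 u lam : ℕ → ℝ)
    (x : ℕ → ℕ → ℝ) (p k : ℕ) : ℝ :=
  if k = 0 then lam0 p * u p * (1 - ∑ q ∈ Finset.range M, x q 1)
  else if k = n then lam n * x p n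
  else lam k * x p k * (1 - ∑ q ∈ Finset.range M, x q (k + 1))

/-- Component `dx^p_j/dt` of the cross-talk RFM vector field. -/
noncomputable def crossField (M n : ℕ) (lam0 u lam : ℕ → ℝ)
    (x : ℕ → ℕ → ℝ) (p j : ℕ) : ℝ :=
  crossFlow M n lam0 u lam x p (j - 1) - crossFlow M n lam0 u lam x p j

/-- Flux from site `k` to site `k+1` of a standard RFM of length `n` with unit
input, initiation rate `lam0s` and rates `lam j`, state `s` (1-based). -/
noncomputable def rfmFlow (n : ℕ) (lam0s : ℝ) (lam : ℕ → ℝ)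
    (s : ℕ → ℝ) (k : ℕ) : ℝ :=
  if k = 0 then lam0s * (1 - s 1)
  else if k = n then lam n * s n
  else lam k * s k * (1 - s (k + 1))

/-- In a cross-talk RFM with homogeneous elongation rates
`λ^p_j = λ_j` and constant inputs `u^p > 0`, along any solution the species
sums `s_j(t) = ∑_p x^p_j(t)` satisfy the standard RFM equations of length `n`
with rates `λ_1,…,λ_n`, unit input, and effective initiation rate
`λ^s_0 = ∑_p λ^p_0 u^p`; moreover each individual occupancy satisfies
`dx^p_j/dt = λ_{j-1}(1-s_j)x^p_{j-1} - λ_j(1-s_{j+1})x^p_j` for `1 < j < n`. -/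
theorem crosstalk_homogeneous_species_sums (M n : ℕ) (hM : 0 < M) (hn : 0 < n)
    (lam0 u lam : ℕ → ℝ)
    (hlam0 : ∀ p < M, 0 < lam0 p) (hu : ∀ p < M, 0 < u p)
    (hlam : ∀ j, 1 ≤ j → j ≤ n → 0 < lam j)
    (X : ℝ → ℕ → ℕ → ℝ)
    (hbox : ∀ t : ℝ, ∀ p < M, ∀ j, 1 ≤ j → j ≤ n → X t p j ∈ Set.Icc (0:ℝ) 1)
    (hsum : ∀ t : ℝ, ∀ j, 1 ≤ j → j ≤ n → ∑ p ∈ Finset.range M, X t p j ≤ 1)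
    (hsol : ∀ t : ℝ, ∀ p < M, ∀ j, 1 ≤ j → j ≤ n →
        HasDerivAt (fun τ => X τ p j) (crossField M n lam0 u lam (X t) p j) t) :
    (∀ t : ℝ, ∀ j, 1 ≤ j → j ≤ n →
        HasDerivAt (fun τ => ∑ p ∈ Finset.range M, X τ p j)
          (rfmFlow n (∑ p ∈ Finset.range M, lam0 p * u p) lam
              (fun j' => ∑ p ∈ Finset.range M, X t p j') (j - 1)
            - rfmFlow n (∑ p ∈ Finset.range M, lam0 p * u p) lam
              (fun j' => ∑ p ∈ Finset.range M, X t p j') j) t)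
      ∧ ∀ t : ℝ, ∀ p < M, ∀ j, 1 < j → j < n →
          HasDerivAt (fun τ => X τ p j)
            (lam (j - 1) * (1 - ∑ q ∈ Finset.range M, X t q j) * X t p (j - 1)
              - lam j * (1 - ∑ q ∈ Finset.range M, X t q (j + 1)) * X t p j) t := by
  have key : ∀ (y : ℕ → ℕ → ℝ) (k : ℕ),
      ∑ p ∈ Finset.range M, crossFlow M n lam0 u lam y p k
      = rfmFlow n (∑ p ∈ Finset.range M, lam0 p * u p) lam
          (fun j' => ∑ p ∈ Finset.range M, y p j') k := by
    intro y k
    by_cases h0 : k = 0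
    · simp [crossFlow, rfmFlow, h0, Finset.sum_mul]
    · by_cases hk : k = n
      · simp only [crossFlow, rfmFlow, if_neg h0, hk, if_pos rfl]
        split_ifs <;> simp [Finset.sum_mul, Finset.mul_sum]
      · simp only [crossFlow, rfmFlow, if_neg h0, if_neg hk]
        rw [← Finset.sum_mul, ← Finset.mul_sum]
  constructor
  · intro t j hj1 hjn
    have h := HasDerivAt.fun_sum (fun p hp => hsol t p (Finset.mem_range.mp hp) j hj1 hjn)
    refine h.congr_deriv ?_
    simp only [crossField, Finset.sum_sub_distrib, key]
  · intro t p hp j hj1 hjn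
    have h := hsol t p hp j (le_of_lt hj1) (le_of_lt hjn)
    convert h using 1
    have h1 : j - 1 ≠ 0 := by omega
    have h2 : j - 1 ≠ n := by omega
    have h3 : j ≠ 0 := by omega
    have h4 : j ≠ n := by omega
    have h5 : j - 1 + 1 = j := by omega
    simp only [crossField, crossFlow, if_neg h1, if_neg h2, if_neg h3, if_neg h4, h5]
    ring
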